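/- arXiv:2006.08814 — 3 statements merged into one kernel-verified Lean document; each statement's English description precedes it below -/
import Mathlib

section
/- Let A be a real m×n matrix, b ∈ ℝ^m, c ∈ ℝ^n, and let ρ_p, ρ_d, ρ_g > 0. Suppose (x*, y*, s*, τ*, κ*) is feasible for the homogeneous self-dual embedding (HSD) and complementary, i.e. (x*)ᵀs* + τ*κ* = 0. Take the reference point (x̄, ȳ, τ̄) = (x*, y*, τ*) in the definition of the regularized embedding (rHSD). Then (x*, y*, s*, τ*, κ*) is feasible for (rHSD) with objective value Z(x*, y*, τ*) = 0, every (rHSD)-feasible point (x, y, s, τ, κ) satisfies Z(x, y, τ) ≥ 0, and any (rHSD)-feasible point (x, y, s, τ, κ) with Z(x, y, τ) = 0 satisfies (x, y, τ) = (x*, y*, τ*). In other words, (x*, y*, τ*) is the unique optimal solution of (rHSD). -/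
open Matrix

/-- Feasibility for the homogeneous self-dual embedding (HSD). -/
def hsdFeasible {m n : ℕ} (A : Matrix (Fin m) (Fin n) ℝ) (b : Fin m → ℝ) (c : Fin n → ℝ)
    (x : Fin n → ℝ) (y : Fin m → ℝ) (s : Fin n → ℝ) (τ κ : ℝ) : Prop :=
  s = τ • c - Aᵀ.mulVec y ∧ A.mulVec x = τ • b ∧ κ = b ⬝ᵥ y - c ⬝ᵥ x ∧
  (∀ j, 0 ≤ x j) ∧ (∀ j, 0 ≤ s j) ∧ 0 ≤ τ ∧ 0 ≤ κ

/-- Feasibility for the regularized embedding (rHSD) with reference point (x̄, ȳ, τ̄). -/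
def rhsdFeasible {m n : ℕ} (A : Matrix (Fin m) (Fin n) ℝ) (b : Fin m → ℝ) (c : Fin n → ℝ)
    (ρp ρd ρg : ℝ) (xb : Fin n → ℝ) (yb : Fin m → ℝ) (τb : ℝ)
    (x : Fin n → ℝ) (y : Fin m → ℝ) (s : Fin n → ℝ) (τ κ : ℝ) : Prop :=
  s = τ • c - Aᵀ.mulVec y + ρp • (x - xb) ∧
  A.mulVec x - τ • b + ρd • (y - yb) = 0 ∧
  κ = b ⬝ᵥ y - c ⬝ᵥ x + ρg * (τ - τb) ∧
  (∀ j, 0 ≤ x j) ∧ (∀ j, 0 ≤ s j) ∧ 0 ≤ τ ∧ 0 ≤ κ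

/-- Objective of the regularized embedding (rHSD). -/
def rhsdObj {m n : ℕ} (ρp ρd ρg : ℝ) (xb : Fin n → ℝ) (yb : Fin m → ℝ) (τb : ℝ)
    (x : Fin n → ℝ) (y : Fin m → ℝ) (τ : ℝ) : ℝ :=
  ρp * ((x - xb) ⬝ᵥ x) + ρd * ((y - yb) ⬝ᵥ y) + ρg * (τ - τb) * τ



lemma dot_nonneg {n : ℕ} {u v : Fin n → ℝ} (hu : ∀ j, 0 ≤ u j) (hv : ∀ j, 0 ≤ v j) :
    0 ≤ u ⬝ᵥ v :=
  Finset.sum_nonneg fun j _ => mul_nonneg (hu j) (hv j)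

lemma key {m n : ℕ} (A : Matrix (Fin m) (Fin n) ℝ) (b : Fin m → ℝ) (c : Fin n → ℝ)
    (ρp ρd ρg : ℝ) (xb : Fin n → ℝ) (yb : Fin m → ℝ) (τb : ℝ)
    (x : Fin n → ℝ) (y : Fin m → ℝ) (s : Fin n → ℝ) (τ κ : ℝ)
    (hs : s = τ • c - Aᵀ.mulVec y + ρp • (x - xb))
    (hA : A.mulVec x - τ • b + ρd • (y - yb) = 0)
    (hκ : κ = b ⬝ᵥ y - c ⬝ᵥ x + ρg * (τ - τb)) :
    x ⬝ᵥ s + τ * κ = ρp * ((x - xb) ⬝ᵥ x) + ρd * ((y - yb) ⬝ᵥ y) + ρg * (τ - τb) * τ := by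
  have hAx : A.mulVec x = τ • b - ρd • (y - yb) := by linear_combination hA
  have h1 : x ⬝ᵥ Aᵀ.mulVec y = A.mulVec x ⬝ᵥ y := by
    rw [Matrix.dotProduct_mulVec, Matrix.vecMul_transpose]
  rw [hs, hκ]
  simp only [dotProduct_add, dotProduct_sub, dotProduct_smul, h1, hAx, sub_dotProduct,
    smul_dotProduct, smul_eq_mul, dotProduct_comm x (x - xb), dotProduct_comm x c]
  ring

/-- Exactness of the regularization: a complementary (HSD)-feasible point, taken as
reference point, is the unique optimal solution of (rHSD). -/
theorem exact_regularization {m n : ℕ} (A : Matrix (Fin m) (Fin n) ℝ)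
    (b : Fin m → ℝ) (c : Fin n → ℝ) (ρp ρd ρg : ℝ)
    (hρp : 0 < ρp) (hρd : 0 < ρd) (hρg : 0 < ρg)
    (xs : Fin n → ℝ) (ys : Fin m → ℝ) (ss : Fin n → ℝ) (τs κs : ℝ)
    (hfeas : hsdFeasible A b c xs ys ss τs κs)
    (hcomp : xs ⬝ᵥ ss + τs * κs = 0) :
    (rhsdFeasible A b c ρp ρd ρg xs ys τs xs ys ss τs κs ∧
      rhsdObj ρp ρd ρg xs ys τs xs ys τs = 0) ∧
    (∀ x y s τ κ, rhsdFeasible A b c ρp ρd ρg xs ys τs x y s τ κ →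
      0 ≤ rhsdObj ρp ρd ρg xs ys τs x y τ) ∧
    (∀ x y s τ κ, rhsdFeasible A b c ρp ρd ρg xs ys τs x y s τ κ →
      rhsdObj ρp ρd ρg xs ys τs x y τ = 0 →
      x = xs ∧ y = ys ∧ τ = τs) := by
  obtain ⟨hss, hAxs, hκs, hxnn, hsnn, hτnn, hκnn⟩ := hfeas
  -- each complementarity term vanishes
  have hxsss : 0 ≤ xs ⬝ᵥ ss := dot_nonneg hxnn hsnn
  have hτκs : 0 ≤ τs * κs := mul_nonneg hτnn hκnn
  have hxs0 : xs ⬝ᵥ ss = 0 := by linarith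
  have hτκ0 : τs * κs = 0 := by linarith
  refine ⟨⟨⟨?_, ?_, ?_, hxnn, hsnn, hτnn, hκnn⟩, ?_⟩, ?_, ?_⟩
  · simp [hss, sub_self]
  · simp [sub_self, hAxs]
  · simp [hκs, sub_self]
  · simp [rhsdObj, sub_self]
  · rintro x y s τ κ ⟨hs, hA, hκ, hxnn', hsnn', hτnn', hκnn'⟩
    have hZ := key A b c ρp ρd ρg xs ys τs x y s τ κ hs hA hκ
    rw [rhsdObj, ← hZ]
    exact add_nonneg (dot_nonneg hxnn' hsnn') (mul_nonneg hτnn' hκnn')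
  · rintro x y s τ κ ⟨hs, hA, hκ, hxnn', hsnn', hτnn', hκnn'⟩ hZ0
    have hZ := key A b c ρp ρd ρg xs ys τs x y s τ κ hs hA hκ
    rw [rhsdObj] at hZ0
    have hsum0 : x ⬝ᵥ s + τ * κ = 0 := by rw [hZ, hZ0]
    -- difference point is feasible for the "zero-reference" regularized system
    have hds : s - ss = (τ - τs) • c - Aᵀ.mulVec (y - ys) + ρp • ((x - xs) - 0) := by
      rw [hs, hss, Matrix.mulVec_sub, sub_zero, sub_smul]
      module
    have hdA : A.mulVec (x - xs) - (τ - τs) • b + ρd • ((y - ys) - 0) = 0 := by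
      rw [Matrix.mulVec_sub, hAxs, sub_zero, sub_smul]
      linear_combination hA
    have hdκ : κ - κs = b ⬝ᵥ (y - ys) - c ⬝ᵥ (x - xs) + ρg * ((τ - τs) - 0) := by
      rw [hκ, hκs, dotProduct_sub, dotProduct_sub, sub_zero]
      ring
    have hQ := key A b c ρp ρd ρg 0 0 0 (x - xs) (y - ys) (s - ss) (τ - τs) (κ - κs)
      hds hdA hdκ
    simp only [sub_zero] at hQ
    -- expand the left side of hQ
    have hexp : (x - xs) ⬝ᵥ (s - ss) + (τ - τs) * (κ - κs)
        = (x ⬝ᵥ s + τ * κ) - (x ⬝ᵥ ss + xs ⬝ᵥ s + τ * κs + τs * κ)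
          + (xs ⬝ᵥ ss + τs * κs) := by
      simp only [dotProduct_sub, sub_dotProduct]
      ring
    have hcross : 0 ≤ x ⬝ᵥ ss + xs ⬝ᵥ s + τ * κs + τs * κ := by
      have := dot_nonneg hxnn' hsnn
      have := dot_nonneg hxnn hsnn'
      have := mul_nonneg hτnn' hκnn
      have := mul_nonneg hτnn hκnn'
      linarith
    have hQle : ρp * ((x - xs) ⬝ᵥ (x - xs)) + ρd * ((y - ys) ⬝ᵥ (y - ys))
        + ρg * (τ - τs) * (τ - τs) ≤ 0 := by
      rw [← hQ, hexp, hsum0, hcomp]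
      linarith
    have h1 : 0 ≤ (x - xs) ⬝ᵥ (x - xs) :=
      Finset.sum_nonneg fun j _ => mul_self_nonneg _
    have h2 : 0 ≤ (y - ys) ⬝ᵥ (y - ys) :=
      Finset.sum_nonneg fun j _ => mul_self_nonneg _
    have h3 : 0 ≤ (τ - τs) * (τ - τs) := mul_self_nonneg _
    have hp1 : 0 ≤ ρp * ((x - xs) ⬝ᵥ (x - xs)) := mul_nonneg hρp.le h1
    have hp2 : 0 ≤ ρd * ((y - ys) ⬝ᵥ (y - ys)) := mul_nonneg hρd.le h2
    have hp3 : 0 ≤ ρg * (τ - τs) * (τ - τs) := by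
      rw [mul_assoc]; exact mul_nonneg hρg.le h3
    have hx0 : (x - xs) ⬝ᵥ (x - xs) = 0 := by
      have : ρp * ((x - xs) ⬝ᵥ (x - xs)) = 0 := by linarith
      exact (mul_eq_zero.mp this).resolve_left hρp.ne'
    have hy0 : (y - ys) ⬝ᵥ (y - ys) = 0 := by
      have : ρd * ((y - ys) ⬝ᵥ (y - ys)) = 0 := by linarith
      exact (mul_eq_zero.mp this).resolve_left hρd.ne'
    have hτ0 : (τ - τs) * (τ - τs) = 0 := by
      have h : ρg * ((τ - τs) * (τ - τs)) = 0 := by linarith [mul_assoc ρg (τ - τs) (τ - τs)]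
      exact (mul_eq_zero.mp h).resolve_left hρg.ne'
    refine ⟨?_, ?_, ?_⟩
    · have := dotProduct_self_eq_zero.mp hx0
      exact sub_eq_zero.mp this
    · have := dotProduct_self_eq_zero.mp hy0
      exact sub_eq_zero.mp this
    · exact sub_eq_zero.mp (mul_self_eq_zero.mp hτ0)
end

section
/- Let A be a real m×n matrix, b ∈ ℝ^m, c ∈ ℝ^n, ρ_p, ρ_d, ρ_g > 0, and x̄ ∈ ℝ^n, ȳ ∈ ℝ^m, τ̄ ∈ ℝ. If (x, y, s, τ, κ) is feasible for the regularized embedding (rHSD), then its objective value satisfies Z(x, y, τ) = ρ_p(x − x̄)ᵀx + ρ_d(y − ȳ)ᵀy + ρ_g(τ − τ̄)τ = xᵀs + τκ, and consequently Z(x, y, τ) ≥ 0. -/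
open Matrix

/-- Any (rHSD)-feasible point has objective value `xᵀs + τκ`, hence nonnegative objective. -/
theorem rhsd_obj_eq_compl_gap {m n : ℕ} (A : Matrix (Fin m) (Fin n) ℝ)
    (b : Fin m → ℝ) (c : Fin n → ℝ) (ρp ρd ρg : ℝ)
    (hρp : 0 < ρp) (hρd : 0 < ρd) (hρg : 0 < ρg)
    (xb : Fin n → ℝ) (yb : Fin m → ℝ) (τb : ℝ)
    (x : Fin n → ℝ) (y : Fin m → ℝ) (s : Fin n → ℝ) (τ κ : ℝ)
    (hfeas : rhsdFeasible A b c ρp ρd ρg xb yb τb x y s τ κ) :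
    ρp * ((x - xb) ⬝ᵥ x) + ρd * ((y - yb) ⬝ᵥ y) + ρg * (τ - τb) * τ = x ⬝ᵥ s + τ * κ ∧
    0 ≤ ρp * ((x - xb) ⬝ᵥ x) + ρd * ((y - yb) ⬝ᵥ y) + ρg * (τ - τb) * τ := by
  obtain ⟨hs, hd, hk, hx, hsn, hτ, hκ⟩ := hfeas
  have h3 : A.mulVec x = τ • b - ρd • (y - yb) := by
    funext i
    have := congrFun hd i
    simp only [Pi.add_apply, Pi.sub_apply, Pi.smul_apply, Pi.zero_apply, smul_eq_mul] at this ⊢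
    linarith
  have h2 : x ⬝ᵥ Aᵀ.mulVec y = y ⬝ᵥ A.mulVec x := by
    rw [dotProduct_mulVec, vecMul_transpose, dotProduct_comm]
  have h1 : x ⬝ᵥ s = τ * (x ⬝ᵥ c) - y ⬝ᵥ A.mulVec x + ρp * (x ⬝ᵥ (x - xb)) := by
    rw [hs]
    simp [dotProduct_add, dotProduct_sub, dotProduct_smul, smul_eq_mul, h2]
  have h4 : y ⬝ᵥ A.mulVec x = τ * (y ⬝ᵥ b) - ρd * (y ⬝ᵥ (y - yb)) := by
    rw [h3]
    simp [dotProduct_sub, dotProduct_smul, smul_eq_mul]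
  have heq : ρp * ((x - xb) ⬝ᵥ x) + ρd * ((y - yb) ⬝ᵥ y) + ρg * (τ - τb) * τ
      = x ⬝ᵥ s + τ * κ := by
    rw [h1, h4, hk, dotProduct_comm x (x - xb), dotProduct_comm y (y - yb),
      dotProduct_comm x c, dotProduct_comm y b]
    ring
  refine ⟨heq, heq ▸ add_nonneg ?_ (mul_nonneg hτ hκ)⟩
  exact Finset.sum_nonneg fun j _ => mul_nonneg (hx j) (hsn j)
end

section
/- Let A be a real m×n matrix, b ∈ ℝ^m, c ∈ ℝ^n. Suppose (x*, y*, s*, τ*, κ*) is feasible for the homogeneous self-dual embedding (HSD) with τ* > 0. Then x*/τ* is feasible for the primal LP (P), (y*/τ*, s*/τ*) is feasible for the dual LP (D), and cᵀ(x*/τ*) = bᵀ(y*/τ*). Consequently, x*/τ* is optimal for (P), i.e. cᵀ(x*/τ*) ≤ cᵀx for every x ∈ ℝ^n with Ax = b and x ≥ 0, and (y*/τ*, s*/τ*) is optimal for (D), i.e. bᵀy ≤ bᵀ(y*/τ*) for every (y, s) with Aᵀy + s = c and s ≥ 0. -/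
open Matrix

/-- Weak duality. -/
lemma weak_duality_aux {m n : ℕ} (A : Matrix (Fin m) (Fin n) ℝ)
    (b : Fin m → ℝ) (c : Fin n → ℝ) (x : Fin n → ℝ) (y : Fin m → ℝ) (s : Fin n → ℝ)
    (hP : A.mulVec x = b) (hx : ∀ j, 0 ≤ x j)
    (hD : Aᵀ.mulVec y + s = c) (hs : ∀ j, 0 ≤ s j) :
    b ⬝ᵥ y ≤ c ⬝ᵥ x := by
  have key : c ⬝ᵥ x - b ⬝ᵥ y = s ⬝ᵥ x := by
    rw [← hP, ← hD]
    have h1 : (Aᵀ.mulVec y + s) ⬝ᵥ x = Aᵀ.mulVec y ⬝ᵥ x + s ⬝ᵥ x := by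
      simp [add_dotProduct]
    have h2 : Aᵀ.mulVec y ⬝ᵥ x = A.mulVec x ⬝ᵥ y := by
      simp only [Matrix.mulVec, dotProduct, Matrix.transpose_apply,
        Finset.sum_mul, Finset.mul_sum]
      rw [Finset.sum_comm]
      exact Finset.sum_congr rfl fun i _ => Finset.sum_congr rfl fun j _ => by ring
    rw [h1, h2]; ring
  have hsx : 0 ≤ s ⬝ᵥ x :=
    Finset.sum_nonneg fun j _ => mul_nonneg (hs j) (hx j)
  linarith [key]

/-- From an (HSD)-feasible point with τ* > 0 one recovers a primal-dual optimal pair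
for the original LP by scaling with 1/τ*. -/
theorem hsd_pos_tau_gives_optimal {m n : ℕ} (A : Matrix (Fin m) (Fin n) ℝ)
    (b : Fin m → ℝ) (c : Fin n → ℝ)
    (xs : Fin n → ℝ) (ys : Fin m → ℝ) (ss : Fin n → ℝ) (τs κs : ℝ)
    (hfeas : hsdFeasible A b c xs ys ss τs κs) (hτ : 0 < τs) :
    -- x*/τ* is primal feasible
    (A.mulVec (τs⁻¹ • xs) = b ∧ (∀ j, 0 ≤ (τs⁻¹ • xs) j)) ∧
    -- (y*/τ*, s*/τ*) is dual feasible
    (Aᵀ.mulVec (τs⁻¹ • ys) + τs⁻¹ • ss = c ∧ (∀ j, 0 ≤ (τs⁻¹ • ss) j)) ∧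
    -- equal objectives
    c ⬝ᵥ (τs⁻¹ • xs) = b ⬝ᵥ (τs⁻¹ • ys) ∧
    -- primal optimality
    (∀ x : Fin n → ℝ, A.mulVec x = b → (∀ j, 0 ≤ x j) → c ⬝ᵥ (τs⁻¹ • xs) ≤ c ⬝ᵥ x) ∧
    -- dual optimality
    (∀ (y : Fin m → ℝ) (s : Fin n → ℝ), Aᵀ.mulVec y + s = c → (∀ j, 0 ≤ s j) →
      b ⬝ᵥ y ≤ b ⬝ᵥ (τs⁻¹ • ys)) := by
  obtain ⟨hs, hAx, hκ, hx0, hs0, hτ0, hκ0⟩ := hfeas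
  have hτne : τs ≠ 0 := ne_of_gt hτ
  have hinv : 0 < τs⁻¹ := inv_pos.mpr hτ
  -- primal feasibility
  have hP : A.mulVec (τs⁻¹ • xs) = b := by
    rw [Matrix.mulVec_smul, hAx, smul_smul, inv_mul_cancel₀ hτne, one_smul]
  have hPx : ∀ j, 0 ≤ (τs⁻¹ • xs) j := fun j =>
    mul_nonneg (le_of_lt hinv) (hx0 j)
  -- dual feasibility
  have hD : Aᵀ.mulVec (τs⁻¹ • ys) + τs⁻¹ • ss = c := by
    rw [Matrix.mulVec_smul, hs]
    rw [smul_sub, smul_smul, inv_mul_cancel₀ hτne, one_smul]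
    abel
  have hDs : ∀ j, 0 ≤ (τs⁻¹ • ss) j := fun j =>
    mul_nonneg (le_of_lt hinv) (hs0 j)
  -- equal objectives
  have hwd : b ⬝ᵥ (τs⁻¹ • ys) ≤ c ⬝ᵥ (τs⁻¹ • xs) :=
    weak_duality_aux A b c _ _ _ hP hPx hD hDs
  have hgap : c ⬝ᵥ (τs⁻¹ • xs) ≤ b ⬝ᵥ (τs⁻¹ • ys) := by
    have h1 : c ⬝ᵥ (τs⁻¹ • xs) = τs⁻¹ * (c ⬝ᵥ xs) := by
      simp [dotProduct_smul, smul_eq_mul]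
    have h2 : b ⬝ᵥ (τs⁻¹ • ys) = τs⁻¹ * (b ⬝ᵥ ys) := by
      simp [dotProduct_smul, smul_eq_mul]
    rw [h1, h2]
    have : c ⬝ᵥ xs ≤ b ⬝ᵥ ys := by linarith
    exact mul_le_mul_of_nonneg_left this (le_of_lt hinv)
  have heq : c ⬝ᵥ (τs⁻¹ • xs) = b ⬝ᵥ (τs⁻¹ • ys) := le_antisymm hgap hwd
  refine ⟨⟨hP, hPx⟩, ⟨hD, hDs⟩, heq, ?_, ?_⟩
  · intro x hx hxpos
    calc c ⬝ᵥ (τs⁻¹ • xs) = b ⬝ᵥ (τs⁻¹ • ys) := heq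
    _ ≤ c ⬝ᵥ x := weak_duality_aux A b c x _ _ hx hxpos hD hDs
  · intro y s hys hspos
    calc b ⬝ᵥ y ≤ c ⬝ᵥ (τs⁻¹ • xs) := weak_duality_aux A b c _ y s hP hPx hys hspos
    _ = b ⬝ᵥ (τs⁻¹ • ys) := heq
end
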